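/- Let n ≥ 2 be a natural number and define C₄ : (0,1/2) → ℝ by C₄(w) = n·(10w+3)/(30·w·(1−2w)) + 1/(6w). Then w* = (−3n − 5 + 2√(6n² + 10n))/(10(n−1)) lies in (0,1/2) and is the unique minimizer of C₄ on (0,1/2); that is, C₄(w*) < C₄(w) for every w ∈ (0,1/2) with w ≠ w*. -/

import Mathlib

/-- Quadratic regression, Case 4: unique minimizer of
C₄(w) = n(10w+3)/(30w(1-2w)) + 1/(6w) on (0,1/2). -/
theorem stmt_11 (n : ℕ) (hn : 2 ≤ n) :
    (-3*(n:ℝ) - 5 + 2 * Real.sqrt (6*(n:ℝ)^2 + 10*(n:ℝ))) / (10 * ((n:ℝ) - 1)) ∈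
        Set.Ioo (0:ℝ) (1/2) ∧
    ∀ w ∈ Set.Ioo (0:ℝ) (1/2),
      w ≠ (-3*(n:ℝ) - 5 + 2 * Real.sqrt (6*(n:ℝ)^2 + 10*(n:ℝ))) / (10 * ((n:ℝ) - 1)) →
      (fun w : ℝ => (n:ℝ) * (10*w + 3) / (30 * w * (1 - 2*w)) + 1 / (6*w))
          ((-3*(n:ℝ) - 5 + 2 * Real.sqrt (6*(n:ℝ)^2 + 10*(n:ℝ))) / (10 * ((n:ℝ) - 1))) <
        (fun w : ℝ => (n:ℝ) * (10*w + 3) / (30 * w * (1 - 2*w)) + 1 / (6*w)) w := by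
  have hN : (2:ℝ) ≤ (n:ℝ) := by exact_mod_cast hn
  set N : ℝ := (n:ℝ) with hNdef
  have hNpos : 0 < 6*N^2 + 10*N := by nlinarith
  set s : ℝ := Real.sqrt (6*N^2 + 10*N) with hsdef
  have hs0 : 0 ≤ s := Real.sqrt_nonneg _
  have hs2 : s^2 = 6*N^2 + 10*N := Real.sq_sqrt hNpos.le
  have hden : (0:ℝ) < 10 * (N - 1) := by linarith
  set t : ℝ := (-3*N - 5 + 2 * s) / (10 * (N - 1)) with htdef
  -- t > 0
  have hnum : 0 < -3*N - 5 + 2 * s := by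
    have h1 : 3*N + 5 < 2*s := by nlinarith [sq_nonneg (2*s - (3*N+5))]
    linarith
  have ht0 : 0 < t := div_pos hnum hden
  -- t < 1/2
  have ht12 : t < 1/2 := by
    rw [htdef, div_lt_iff₀ hden]
    have h2 : 2*s < 8*N := by nlinarith [sq_nonneg (2*s - 8*N)]
    linarith
  -- key quadratic relation
  have hq : 20*(N-1)*t^2 + 4*(3*N+5)*t - (3*N+5) = 0 := by
    have hd : (10 * (N - 1)) ≠ 0 := ne_of_gt hden
    have hd1 : N - 1 ≠ 0 := (by linarith : (0:ℝ) < N - 1).ne'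
    rw [htdef]
    field_simp
    nlinarith [hs2]
  refine ⟨⟨ht0, ht12⟩, ?_⟩
  rintro w ⟨hw0, hw12⟩ hwne
  simp only
  have hw2 : 0 < 1 - 2*w := by linarith
  have ht2 : 0 < 1 - 2*t := by linarith
  have hw0' : w ≠ 0 := ne_of_gt hw0
  have ht0' : t ≠ 0 := ne_of_gt ht0
  -- rewrite both sides as a single fraction
  have hC : ∀ x : ℝ, 0 < x → 0 < 1 - 2*x →
      N * (10*x + 3) / (30 * x * (1 - 2*x)) + 1 / (6*x)
        = ((10*N-10)*x + 3*N+5) / (30 * x * (1 - 2*x)) := by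
    intro x hx hx2
    have hx2' : 1 - 2*x ≠ 0 := hx2.ne'
    have hD1 : 30 * x * (1 - 2*x) ≠ 0 := mul_ne_zero (mul_ne_zero (by norm_num) hx.ne') hx2'
    have hD2 : 6 * x ≠ 0 := mul_ne_zero (by norm_num) hx.ne'
    rw [div_add_div _ _ hD1 hD2, div_eq_div_iff (mul_ne_zero hD1 hD2) hD1]
    ring
  rw [hC t ht0 ht2, hC w hw0 hw2]
  have hDw : 0 < 30 * w * (1 - 2*w) := by positivity
  have hDt : 0 < 30 * t * (1 - 2*t) := by positivity
  rw [div_lt_div_iff₀ hDt hDw]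
  have hatb : 0 < (10*N-10)*t + 3*N+5 := by nlinarith
  have hwt : 0 < (w - t)^2 := by
    have h := sub_ne_zero.mpr hwne
    positivity
  have hid : ((10*N-10)*w + 3*N+5) * (30 * t * (1 - 2*t))
      - ((10*N-10)*t + 3*N+5) * (30 * w * (1 - 2*w))
      = 60 * ((10*N-10)*t + 3*N+5) * (w - t)^2 + 30*(w-t) *
        (20*(N-1)*t^2 + 4*(3*N+5)*t - (3*N+5)) := by ring
  rw [hq] at hid
  nlinarith [mul_pos hatb hwt]
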